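/- Let ψ be a unit vector in (Fin 2 → Fin 2) → ℂ (a pure two-qubit state), let ρ(f,g) = ψ(f)·conj(ψ(g)) be its density matrix, let ρ_A be the reduced density matrix of the second qubit, and let C ≥ 0 be the concurrence defined by C² = 2(1 − Tr ρ_A²). Then the maximum of { Re Tr(ρ · B₂) : B₂ a two-qubit Bell operator } equals 2√(1 + C²). -/

import Mathlib

open Matrix Complex Polynomial
open scoped ComplexOrder

noncomputable section

/-- The three Pauli matrices σ_x, σ_y, σ_z. -/
def pauli : Fin 3 → Matrix (Fin 2) (Fin 2) ℂ :=
  ![!![0, 1; 1, 0], !![0, -Complex.I; Complex.I, 0], !![1, 0; 0, -1]]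

/-- Kronecker product of `n` 2×2 matrices, as a matrix on `(Fin n → Fin 2)`. -/
def kron {n : ℕ} (M : Fin n → Matrix (Fin 2) (Fin 2) ℂ) :
    Matrix (Fin n → Fin 2) (Fin n → Fin 2) ℂ :=
  Matrix.of fun f g => ∏ k, M k (f k) (g k)

/-- The operator a¹σ_x + a²σ_y + a³σ_z associated to a vector a ∈ ℝ³. -/
def opOf (a : Fin 3 → ℝ) : Matrix (Fin 2) (Fin 2) ℂ :=
  ∑ i, (a i : ℂ) • pauli i

/-- `B` is an `n`-qubit Bell operator:
`B = A₁⊗⋯⊗A_{n-1}⊗(A_n + A_n′) + A₁′⊗⋯⊗A_{n-1}′⊗(A_n − A_n′)`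
for unit vectors `a k`, `a' k` in ℝ³. -/
def IsBellOp (n : ℕ) (B : Matrix (Fin n → Fin 2) (Fin n → Fin 2) ℂ) : Prop :=
  ∃ a a' : Fin n → Fin 3 → ℝ,
    (∀ k, ∑ i, (a k i) ^ 2 = 1) ∧ (∀ k, ∑ i, (a' k i) ^ 2 = 1) ∧
    B = kron (fun k => if (k : ℕ) = n - 1 then opOf (a k) + opOf (a' k) else opOf (a k))
      + kron (fun k => if (k : ℕ) = n - 1 then opOf (a k) - opOf (a' k) else opOf (a' k))

/-- The generalized R-matrix of an `n`-qubit density matrix: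
`R(I, j) = Re Tr(ρ · σ_{i₁}⊗⋯⊗σ_{i_{n-1}}⊗σ_j)`. -/
def Rmat {n : ℕ} (ρ : Matrix (Fin n → Fin 2) (Fin n → Fin 2) ℂ)
    (I : Fin (n - 1) → Fin 3) (j : Fin 3) : ℝ :=
  (Matrix.trace (ρ * kron fun k =>
    if h : (k : ℕ) < n - 1 then pauli (I ⟨k, h⟩) else pauli j)).re

/-- The 3×3 matrix `RᵀR` built from the generalized R-matrix. -/
def RtR {n : ℕ} (ρ : Matrix (Fin n → Fin 2) (Fin n → Fin 2) ℂ) :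
    Matrix (Fin 3) (Fin 3) ℝ :=
  Matrix.of fun j j' => ∑ I : Fin (n - 1) → Fin 3, Rmat ρ I j * Rmat ρ I j'

/- ───────────────────────── auxiliary lemmas ───────────────────────── -/

lemma BPaux_sum_pi_two {M : Type*} [AddCommMonoid M] (F : (Fin 2 → Fin 2) → M) :
    ∑ f, F f = F ![0,0] + F ![0,1] + F ![1,0] + F ![1,1] := by
  rw [← (finTwoArrowEquiv (Fin 2)).symm.sum_comp]
  simp [Fintype.sum_prod_type, finTwoArrowEquiv, Fin.sum_univ_two]
  rw [← add_assoc]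

set_option maxHeartbeats 4000000 in
lemma BPaux_K1 (ψ : (Fin 2 → Fin 2) → ℂ)
    (ρ : Matrix (Fin 2 → Fin 2) (Fin 2 → Fin 2) ℂ)
    (hρ : ρ = Matrix.of fun f g => ψ f * (starRingEnd ℂ) (ψ g))
    (ρA : Matrix (Fin 2) (Fin 2) ℂ)
    (hρA : ρA = Matrix.of fun a a' => ∑ b : Fin 2, ρ ![b, a] ![b, a'])
    (j j' : Fin 3) :
    (∑ i, (Matrix.trace (ρ * kron ![pauli i, pauli j])).re
        * (Matrix.trace (ρ * kron ![pauli i, pauli j'])).re)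
      + 2 * (Matrix.trace (ρA * ρA)).re * (if j = j' then 1 else 0)
    = 2 * ((∑ f, Complex.normSq (ψ f)) ^ 2) * (if j = j' then 1 else 0)
      + (Matrix.trace (ρA * pauli j)).re * (Matrix.trace (ρA * pauli j')).re := by
  subst hρ hρA
  fin_cases j <;> fin_cases j' <;>
    · simp [Matrix.trace, Matrix.mul_apply, BPaux_sum_pi_two, Fin.sum_univ_two,
        Fin.sum_univ_three, pauli, kron, Matrix.diag, Complex.normSq_apply, Fin.prod_univ_two]
      ring

lemma BPaux_K2 (ψ : (Fin 2 → Fin 2) → ℂ)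
    (ρ : Matrix (Fin 2 → Fin 2) (Fin 2 → Fin 2) ℂ)
    (hρ : ρ = Matrix.of fun f g => ψ f * (starRingEnd ℂ) (ψ g))
    (ρA : Matrix (Fin 2) (Fin 2) ℂ)
    (hρA : ρA = Matrix.of fun a a' => ∑ b : Fin 2, ρ ![b, a] ![b, a']) :
    ∑ j, (Matrix.trace (ρA * pauli j)).re ^ 2
      = 2 * (Matrix.trace (ρA * ρA)).re - (∑ f, Complex.normSq (ψ f)) ^ 2 := by
  subst hρ hρA
  rw [BPaux_sum_pi_two]
  simp [Matrix.trace, Matrix.mul_apply, Fin.sum_univ_two, Fin.sum_univ_three, pauli,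
    Matrix.diag, Complex.normSq_apply]
  ring

lemma BPaux_opOf_add (x y : Fin 3 → ℝ) :
    opOf (fun i => x i + y i) = opOf x + opOf y := by
  simp only [opOf, Complex.ofReal_add, add_smul, Finset.sum_add_distrib]

lemma BPaux_opOf_sub (x y : Fin 3 → ℝ) :
    opOf (fun i => x i - y i) = opOf x - opOf y := by
  simp only [opOf, Complex.ofReal_sub, sub_smul, Finset.sum_sub_distrib]

lemma BPaux_kron_opOf (c d : Fin 3 → ℝ) :
    kron ![opOf c, opOf d] = ∑ i, ∑ j, ((c i * d j : ℝ) : ℂ) • kron ![pauli i, pauli j] := by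
  ext f g
  simp [kron, opOf, Matrix.sum_apply, Fin.prod_univ_two, Matrix.smul_apply, Finset.sum_mul_sum,
    smul_eq_mul]
  refine Finset.sum_congr rfl fun i _ => Finset.sum_congr rfl fun j _ => by push_cast; ring

lemma BPaux_val_expand (ρ : Matrix (Fin 2 → Fin 2) (Fin 2 → Fin 2) ℂ) (c d : Fin 3 → ℝ) :
    (Matrix.trace (ρ * kron ![opOf c, opOf d])).re
      = ∑ i, ∑ j, c i * d j * (Matrix.trace (ρ * kron ![pauli i, pauli j])).re := by
  rw [BPaux_kron_opOf]
  simp only [Finset.mul_sum, Matrix.mul_smul, Matrix.trace_sum, Matrix.trace_smul,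
    Complex.re_sum, smul_eq_mul, Complex.re_ofReal_mul]

lemma BPaux_bell_eq (a a' : Fin 2 → Fin 3 → ℝ) :
    (kron (fun k : Fin 2 => if (k : ℕ) = 2 - 1 then opOf (a k) + opOf (a' k) else opOf (a k))
      + kron (fun k : Fin 2 => if (k : ℕ) = 2 - 1 then opOf (a k) - opOf (a' k) else opOf (a' k)))
    = kron ![opOf (a 0), opOf (fun i => a 1 i + a' 1 i)]
      + kron ![opOf (a' 0), opOf (fun i => a 1 i - a' 1 i)] := by
  rw [BPaux_opOf_add, BPaux_opOf_sub]
  congr 1 <;> · congr 1; funext k; fin_cases k <;> simp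

lemma BPaux_CS3 (x y : Fin 3 → ℝ) : (∑ i, x i * y i)^2 ≤ (∑ i, x i^2) * (∑ i, y i^2) := by
  simp only [Fin.sum_univ_three]
  nlinarith [sq_nonneg (x 0*y 1 - x 1*y 0), sq_nonneg (x 0*y 2 - x 2*y 0),
    sq_nonneg (x 1*y 2 - x 2*y 1)]

lemma BPaux_gram3 (b u v : Fin 3 → ℝ) :
    (∑ i, b i*u i)^2*(∑ i, v i^2) + (∑ i, b i*v i)^2*(∑ i, u i^2)
      - 2*(∑ i, u i*v i)*((∑ i, b i*u i)*(∑ i, b i*v i))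
    ≤ (∑ i, b i^2)*((∑ i, u i^2)*(∑ i, v i^2) - (∑ i, u i*v i)^2) := by
  simp only [Fin.sum_univ_three]
  nlinarith [sq_nonneg (b 0*(u 1*v 2 - u 2*v 1) - b 1*(u 0*v 2 - u 2*v 0)
    + b 2*(u 0*v 1 - u 1*v 0))]

lemma BPaux_scalarBound (K s t c A B : ℝ) (hK0 : 0 ≤ K)
    (hA0 : 0 ≤ A) (hB0 : 0 ≤ B)
    (hA : A^2 = K*(2+2*c) + (s+t)^2) (hB : B^2 = K*(2-2*c)+(s-t)^2)
    (hc : c^2 ≤ 1) (hs : s^2 ≤ 1-K) (ht : t^2 ≤ 1-K)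
    (hbes : s^2+t^2-2*c*(s*t) ≤ (1-K)*(1-c^2)) : (A+B)^2 ≤ 4*(1+K) := by
  rcases lt_or_eq_of_le hc with hlt | heq
  · have key : A^2*(2-2*c) + B^2*(2+2*c) ≤ (1+K)*((2+2*c)*(2-2*c)) := by
      rw [hA, hB]; nlinarith [hbes]
    have hxy : (0:ℝ) < (2+2*c)*(2-2*c) := by nlinarith
    nlinarith [sq_nonneg (A*(2-2*c) - B*(2+2*c)), key, hxy]
  · have h0 : (c-1)*(c+1) = 0 := by nlinarith
    rcases mul_eq_zero.1 h0 with h1 | h1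
    · have hc1 : c = 1 := by linarith
      subst hc1
      have hB2 : B = 0 := by nlinarith [sq_nonneg (s-t)]
      nlinarith [sq_nonneg (s+t)]
    · have hc1 : c = -1 := by linarith
      subst hc1
      have hA2 : A = 0 := by nlinarith [sq_nonneg (s+t)]
      nlinarith [sq_nonneg (s-t)]

lemma BPaux_exists_ortho (b : Fin 3 → ℝ) :
    ∃ e₁ e₂ : Fin 3 → ℝ, ∑ i, (e₁ i)^2 = 1 ∧ ∑ i, (e₂ i)^2 = 1 ∧ ∑ i, e₁ i * e₂ i = 0
      ∧ (∑ i, b i * e₁ i)^2 = ∑ i, (b i)^2 ∧ ∑ i, b i * e₂ i = 0 := by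
  by_cases hb : b = 0
  · exact ⟨![1,0,0], ![0,1,0], by simp [Fin.sum_univ_three], by simp [Fin.sum_univ_three],
      by simp [Fin.sum_univ_three], by simp [hb, Fin.sum_univ_three],
      by simp [hb, Fin.sum_univ_three]⟩
  · obtain ⟨i0, hi0⟩ := Function.ne_iff.1 hb
    have hβ0 : 0 < ∑ i, (b i)^2 := by
      refine Finset.sum_pos' (fun i _ => sq_nonneg _) ⟨i0, Finset.mem_univ i0, ?_⟩
      exact lt_of_le_of_ne (sq_nonneg _) (Ne.symm (pow_ne_zero 2 hi0))
    set β := ∑ i, (b i)^2 with hβdef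
    have hr2 : (Real.sqrt β)^2 = β := Real.sq_sqrt hβ0.le
    have hrne : Real.sqrt β ≠ 0 := by positivity
    have he1n : ∑ i, (b i / Real.sqrt β)^2 = 1 := by
      simp only [div_pow, hr2, ← Finset.sum_div, ← hβdef]
      exact div_self hβ0.ne'
    have hbe1 : (∑ i, b i * (b i / Real.sqrt β))^2 = β := by
      have h1 : ∑ i, b i * (b i / Real.sqrt β) = β / Real.sqrt β := by
        rw [hβdef, Finset.sum_div]
        exact Finset.sum_congr rfl fun i _ => by ring
      rw [h1, div_pow, hr2, sq, mul_div_assoc, div_self hβ0.ne', mul_one]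
    by_cases h01 : b 0 = 0 ∧ b 1 = 0
    · refine ⟨fun i => b i / Real.sqrt β, ![1,0,0], he1n, by simp [Fin.sum_univ_three], ?_,
        hbe1, ?_⟩
      · simp [Fin.sum_univ_three, h01.1]
      · simp [Fin.sum_univ_three, h01.1]
    · have hq : 0 < (b 0)^2 + (b 1)^2 := by
        rcases not_and_or.1 h01 with h | h
        · have := lt_of_le_of_ne (sq_nonneg (b 0)) (Ne.symm (pow_ne_zero 2 h))
          nlinarith [sq_nonneg (b 1)]
        · have := lt_of_le_of_ne (sq_nonneg (b 1)) (Ne.symm (pow_ne_zero 2 h))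
          nlinarith [sq_nonneg (b 0)]
      have hq2 : (Real.sqrt ((b 0)^2 + (b 1)^2))^2 = (b 0)^2 + (b 1)^2 := Real.sq_sqrt hq.le
      have hqne : Real.sqrt ((b 0)^2 + (b 1)^2) ≠ 0 := by positivity
      refine ⟨fun i => b i / Real.sqrt β,
        ![-(b 1) / Real.sqrt ((b 0)^2 + (b 1)^2),
          b 0 / Real.sqrt ((b 0)^2 + (b 1)^2), 0], he1n, ?_, ?_, hbe1, ?_⟩
      · simp only [Fin.sum_univ_three, Matrix.cons_val_zero, Matrix.cons_val_one,
          Matrix.head_cons, Matrix.cons_val_two, Matrix.tail_cons]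
        field_simp
        linarith [hq2]
      · simp only [Fin.sum_univ_three, Matrix.cons_val_zero, Matrix.cons_val_one,
          Matrix.head_cons, Matrix.cons_val_two, Matrix.tail_cons]
        field_simp
        ring
      · simp only [Fin.sum_univ_three, Matrix.cons_val_zero, Matrix.cons_val_one,
          Matrix.head_cons, Matrix.cons_val_two, Matrix.tail_cons]
        field_simp
        ring

set_option maxHeartbeats 1000000 in
lemma BPaux_main (T : Fin 3 → Fin 3 → ℝ) (b : Fin 3 → ℝ) (K : ℝ) (hK0 : 0 ≤ K)
    (hS : ∀ j j', (∑ i, T i j * T i j') = K * (if j = j' then 1 else 0) + b j * b j')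
    (hβ : ∑ j, (b j)^2 = 1 - K) :
    IsGreatest {x : ℝ | ∃ c d c' d' : Fin 3 → ℝ,
      (∑ i, (c i)^2 = 1) ∧ (∑ i, (d i)^2 = 1) ∧ (∑ i, (c' i)^2 = 1) ∧ (∑ i, (d' i)^2 = 1) ∧
      x = (∑ i, ∑ j, c i * (d j + d' j) * T i j) + ∑ i, ∑ j, c' i * (d j - d' j) * T i j}
    (2 * Real.sqrt (1 + K)) := by
  have hsum_b : 0 ≤ ∑ j, (b j)^2 := Finset.sum_nonneg fun j _ => sq_nonneg _
  have hK1 : K ≤ 1 := by linarith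
  have Qform : ∀ u w : Fin 3 → ℝ,
      ∑ i, (∑ j, T i j * u j) * (∑ j, T i j * w j)
        = K * (∑ i, u i * w i) + (∑ j, b j * u j) * (∑ j, b j * w j) := by
    intro u w
    have h00 := hS 0 0; have h01 := hS 0 1; have h02 := hS 0 2
    have h11 := hS 1 1; have h12 := hS 1 2; have h22 := hS 2 2
    rw [if_pos rfl] at h00 h11 h22
    rw [if_neg (by decide)] at h01 h02 h12
    simp only [Fin.sum_univ_three] at h00 h01 h02 h11 h12 h22 ⊢
    linear_combination (u 0 * w 0) * h00 + (u 0 * w 1 + u 1 * w 0) * h01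
      + (u 0 * w 2 + u 2 * w 0) * h02 + (u 1 * w 1) * h11
      + (u 1 * w 2 + u 2 * w 1) * h12 + (u 2 * w 2) * h22
  constructor
  · -- membership: construct an optimal quadruple
    obtain ⟨e₁, e₂, he1, he2, he12, hbe1, hbe2⟩ := BPaux_exists_ortho b
    have he1p : ∑ i, e₁ i * e₁ i = 1 := by simpa only [← pow_two] using he1
    have he2p : ∑ i, e₂ i * e₂ i = 1 := by simpa only [← pow_two] using he2
    have hQ1 : ∑ i, (∑ j, T i j * e₁ j) * (∑ j, T i j * e₁ j) = 1 := by
      rw [Qform, he1p]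
      linear_combination hbe1 + hβ
    by_cases hK : K = 0
    · subst hK
      refine ⟨fun i => ∑ j, T i j * e₁ j, e₁, e₁, e₁, ?_, he1, he1, he1, ?_⟩
      · simp only [pow_two]; exact hQ1
      · have h1 : Real.sqrt (1+0) = 1 := by norm_num
        rw [h1]
        simp only [Fin.sum_univ_three] at hQ1 ⊢
        linear_combination (-2 : ℝ) * hQ1
    · have hKpos : 0 < K := lt_of_le_of_ne hK0 (Ne.symm hK)
      have hκ2 : (Real.sqrt K)^2 = K := Real.sq_sqrt hK0
      have hκne : Real.sqrt K ≠ 0 := (Real.sqrt_pos.2 hKpos).ne'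
      have hG2 : (Real.sqrt (1+K))^2 = 1+K := Real.sq_sqrt (by linarith)
      have hGpos : 0 < Real.sqrt (1+K) := Real.sqrt_pos.2 (by linarith)
      have hGne : Real.sqrt (1+K) ≠ 0 := hGpos.ne'
      have hGinv : ((Real.sqrt (1+K))⁻¹)^2 * (1+K) = 1 := by
        rw [← hG2]; field_simp
        rw [Real.sqrt_sq hGpos.le]
      have hQ2 : ∑ i, (∑ j, T i j * e₂ j) * (∑ j, T i j * e₂ j) = K := by
        rw [Qform, he2p, hbe2]; ring
      refine ⟨fun i => ∑ j, T i j * e₁ j,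
        fun i => (Real.sqrt (1+K))⁻¹ * e₁ i + Real.sqrt K * (Real.sqrt (1+K))⁻¹ * e₂ i,
        fun i => (Real.sqrt K)⁻¹ * (∑ j, T i j * e₂ j),
        fun i => (Real.sqrt (1+K))⁻¹ * e₁ i - Real.sqrt K * (Real.sqrt (1+K))⁻¹ * e₂ i,
        ?_, ?_, ?_, ?_, ?_⟩
      · simp only [pow_two]; exact hQ1
      · simp only [Fin.sum_univ_three] at he1 he2 he12 ⊢
        linear_combination ((Real.sqrt (1+K))⁻¹)^2 * he1
          + (Real.sqrt K * (Real.sqrt (1+K))⁻¹)^2 * he2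
          + (2*((Real.sqrt (1+K))⁻¹*(Real.sqrt K * (Real.sqrt (1+K))⁻¹))) * he12
          + ((Real.sqrt (1+K))⁻¹)^2 * hκ2 + hGinv
      · have h2 : ∑ i, ((Real.sqrt K)⁻¹ * (∑ j, T i j * e₂ j))^2 = ((Real.sqrt K)⁻¹)^2 * K := by
          simp only [Fin.sum_univ_three] at hQ2 ⊢
          linear_combination (((Real.sqrt K)⁻¹)^2) * hQ2
        rw [h2, ← hκ2]
        field_simp
        rw [Real.sqrt_sq (Real.sqrt_nonneg K)]
      · simp only [Fin.sum_univ_three] at he1 he2 he12 ⊢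
        linear_combination ((Real.sqrt (1+K))⁻¹)^2 * he1
          + (Real.sqrt K * (Real.sqrt (1+K))⁻¹)^2 * he2
          - (2*((Real.sqrt (1+K))⁻¹*(Real.sqrt K * (Real.sqrt (1+K))⁻¹))) * he12
          + ((Real.sqrt (1+K))⁻¹)^2 * hκ2 + hGinv
      · -- the value equals 2√(1+K)
        have hv : (∑ i, ∑ j, (∑ j', T i j' * e₁ j') *
              (((Real.sqrt (1+K))⁻¹ * e₁ j + Real.sqrt K * (Real.sqrt (1+K))⁻¹ * e₂ j)
                + ((Real.sqrt (1+K))⁻¹ * e₁ j - Real.sqrt K * (Real.sqrt (1+K))⁻¹ * e₂ j)) * T i j)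
            + ∑ i, ∑ j, ((Real.sqrt K)⁻¹ * (∑ j', T i j' * e₂ j')) *
              (((Real.sqrt (1+K))⁻¹ * e₁ j + Real.sqrt K * (Real.sqrt (1+K))⁻¹ * e₂ j)
                - ((Real.sqrt (1+K))⁻¹ * e₁ j - Real.sqrt K * (Real.sqrt (1+K))⁻¹ * e₂ j)) * T i j
            = 2*(Real.sqrt (1+K))⁻¹ + 2*(Real.sqrt K)*(Real.sqrt (1+K))⁻¹*(Real.sqrt K)⁻¹*K := by
          simp only [Fin.sum_univ_three] at hQ1 hQ2 ⊢
          linear_combination (2*(Real.sqrt (1+K))⁻¹) * hQ1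
            + (2*(Real.sqrt K)*(Real.sqrt (1+K))⁻¹*(Real.sqrt K)⁻¹) * hQ2
        rw [hv]
        field_simp
        linear_combination hG2
  · -- upper bound
    rintro x ⟨c, d, c', d', hc1, hd1, hc'1, hd'1, rfl⟩
    have hQu0 : 0 ≤ ∑ i, (∑ j, T i j * (d j + d' j))^2 :=
      Finset.sum_nonneg fun i _ => sq_nonneg _
    have hQv0 : 0 ≤ ∑ i, (∑ j, T i j * (d j - d' j))^2 :=
      Finset.sum_nonneg fun i _ => sq_nonneg _
    have hQu : ∑ i, (∑ j, T i j * (d j + d' j))^2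
        = K*(2+2*(∑ j, d j * d' j)) + ((∑ j, b j * d j)+(∑ j, b j * d' j))^2 := by
      have hq := Qform (fun j => d j + d' j) (fun j => d j + d' j)
      simp only [Fin.sum_univ_three] at hq hd1 hd'1 ⊢
      linear_combination hq + K * hd1 + K * hd'1
    have hQv : ∑ i, (∑ j, T i j * (d j - d' j))^2
        = K*(2-2*(∑ j, d j * d' j)) + ((∑ j, b j * d j)-(∑ j, b j * d' j))^2 := by
      have hq := Qform (fun j => d j - d' j) (fun j => d j - d' j)
      simp only [Fin.sum_univ_three] at hq hd1 hd'1 ⊢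
      linear_combination hq + K * hd1 + K * hd'1
    have hcc : (∑ j, d j * d' j)^2 ≤ 1 := by
      have := BPaux_CS3 d d'
      rw [hd1, hd'1] at this
      simpa using this
    have hs2 : (∑ j, b j * d j)^2 ≤ 1 - K := by
      have := BPaux_CS3 b d
      rw [hβ, hd1] at this
      simpa using this
    have ht2 : (∑ j, b j * d' j)^2 ≤ 1 - K := by
      have := BPaux_CS3 b d'
      rw [hβ, hd'1] at this
      simpa using this
    have hbes : (∑ j, b j * d j)^2 + (∑ j, b j * d' j)^2
        - 2*(∑ j, d j * d' j)*((∑ j, b j * d j)*(∑ j, b j * d' j))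
        ≤ (1-K)*(1-(∑ j, d j * d' j)^2) := by
      have hg := BPaux_gram3 b d d'
      rw [hd1, hd'1, hβ] at hg
      nlinarith [hg]
    have hABsq := BPaux_scalarBound K (∑ j, b j * d j) (∑ j, b j * d' j) (∑ j, d j * d' j)
      (Real.sqrt (∑ i, (∑ j, T i j * (d j + d' j))^2))
      (Real.sqrt (∑ i, (∑ j, T i j * (d j - d' j))^2))
      hK0 (Real.sqrt_nonneg _) (Real.sqrt_nonneg _)
      (by rw [Real.sq_sqrt hQu0, hQu]) (by rw [Real.sq_sqrt hQv0, hQv])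
      hcc hs2 ht2 hbes
    have h1 : ∑ i, ∑ j, c i * (d j + d' j) * T i j
        ≤ Real.sqrt (∑ i, (∑ j, T i j * (d j + d' j))^2) := by
      have hre : ∑ i, ∑ j, c i * (d j + d' j) * T i j
          = ∑ i, c i * (∑ j, T i j * (d j + d' j)) := by
        simp only [Fin.sum_univ_three]; ring
      have hcs : (∑ i, c i * (∑ j, T i j * (d j + d' j)))^2
          ≤ (∑ i, (c i)^2) * (∑ i, (∑ j, T i j * (d j + d' j))^2) := BPaux_CS3 _ _
      rw [hc1, one_mul] at hcs
      rw [hre]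
      calc ∑ i, c i * (∑ j, T i j * (d j + d' j))
          ≤ |∑ i, c i * (∑ j, T i j * (d j + d' j))| := le_abs_self _
        _ = Real.sqrt ((∑ i, c i * (∑ j, T i j * (d j + d' j)))^2) :=
            (Real.sqrt_sq_eq_abs _).symm
        _ ≤ Real.sqrt (∑ i, (∑ j, T i j * (d j + d' j))^2) := Real.sqrt_le_sqrt hcs
    have h2 : ∑ i, ∑ j, c' i * (d j - d' j) * T i j
        ≤ Real.sqrt (∑ i, (∑ j, T i j * (d j - d' j))^2) := by
      have hre : ∑ i, ∑ j, c' i * (d j - d' j) * T i j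
          = ∑ i, c' i * (∑ j, T i j * (d j - d' j)) := by
        simp only [Fin.sum_univ_three]; ring
      have hcs : (∑ i, c' i * (∑ j, T i j * (d j - d' j)))^2
          ≤ (∑ i, (c' i)^2) * (∑ i, (∑ j, T i j * (d j - d' j))^2) := BPaux_CS3 _ _
      rw [hc'1, one_mul] at hcs
      rw [hre]
      calc ∑ i, c' i * (∑ j, T i j * (d j - d' j))
          ≤ |∑ i, c' i * (∑ j, T i j * (d j - d' j))| := le_abs_self _
        _ = Real.sqrt ((∑ i, c' i * (∑ j, T i j * (d j - d' j)))^2) :=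
            (Real.sqrt_sq_eq_abs _).symm
        _ ≤ Real.sqrt (∑ i, (∑ j, T i j * (d j - d' j))^2) := Real.sqrt_le_sqrt hcs
    have hfin : Real.sqrt (∑ i, (∑ j, T i j * (d j + d' j))^2)
        + Real.sqrt (∑ i, (∑ j, T i j * (d j - d' j))^2) ≤ 2*Real.sqrt (1+K) := by
      have hsq : (Real.sqrt (1+K))^2 = 1+K := Real.sq_sqrt (by linarith)
      nlinarith [hABsq, hsq, Real.sqrt_nonneg (1+K), Real.sqrt_nonneg
        (∑ i, (∑ j, T i j * (d j + d' j))^2), Real.sqrt_nonneg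
        (∑ i, (∑ j, T i j * (d j - d' j))^2)]
    linarith

/-- For a pure two-qubit state `ψ` with concurrence `C` (defined by
`C² = 2(1 − Tr ρ_A²)` where `ρ_A` is the reduced density matrix of the second qubit),
the maximum of `Re Tr(ρ·B₂)` over two-qubit Bell operators equals `2√(1 + C²)`. -/
theorem two_qubit_bell_max_concurrence
    (ψ : (Fin 2 → Fin 2) → ℂ) (hψ : ∑ f, Complex.normSq (ψ f) = 1)
    (ρ : Matrix (Fin 2 → Fin 2) (Fin 2 → Fin 2) ℂ)
    (hρ : ρ = Matrix.of fun f g => ψ f * (starRingEnd ℂ) (ψ g))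
    (ρA : Matrix (Fin 2) (Fin 2) ℂ)
    (hρA : ρA = Matrix.of fun a a' => ∑ b : Fin 2, ρ ![b, a] ![b, a'])
    (Cc : ℝ) (hCc0 : 0 ≤ Cc)
    (hCc : Cc ^ 2 = 2 * (1 - (Matrix.trace (ρA * ρA)).re)) :
    IsGreatest {x : ℝ | ∃ B, IsBellOp 2 B ∧ x = (Matrix.trace (ρ * B)).re}
      (2 * Real.sqrt (1 + Cc ^ 2)) := by
  classical
  have hS : ∀ j j', (∑ i, (Matrix.trace (ρ * kron ![pauli i, pauli j])).re
        * (Matrix.trace (ρ * kron ![pauli i, pauli j'])).re)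
      = Cc^2 * (if j = j' then 1 else 0)
        + (Matrix.trace (ρA * pauli j)).re * (Matrix.trace (ρA * pauli j')).re := by
    intro j j'
    have h := BPaux_K1 ψ ρ hρ ρA hρA j j'
    rw [hψ] at h
    by_cases hjj : j = j'
    · rw [if_pos hjj] at h ⊢; linarith
    · rw [if_neg hjj] at h ⊢; linarith
  have hβ2 : ∑ j, ((Matrix.trace (ρA * pauli j)).re)^2 = 1 - Cc^2 := by
    have h := BPaux_K2 ψ ρ hρ ρA hρA
    rw [hψ] at h
    linarith
  have key := BPaux_main (fun i j => (Matrix.trace (ρ * kron ![pauli i, pauli j])).re)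
    (fun j => (Matrix.trace (ρA * pauli j)).re) (Cc^2) (sq_nonneg Cc) hS hβ2
  have hset : {x : ℝ | ∃ B, IsBellOp 2 B ∧ x = (Matrix.trace (ρ * B)).re}
      = {x : ℝ | ∃ c d c' d' : Fin 3 → ℝ,
        (∑ i, (c i)^2 = 1) ∧ (∑ i, (d i)^2 = 1) ∧ (∑ i, (c' i)^2 = 1) ∧ (∑ i, (d' i)^2 = 1) ∧
        x = (∑ i, ∑ j, c i * (d j + d' j)
            * (Matrix.trace (ρ * kron ![pauli i, pauli j])).re)
          + ∑ i, ∑ j, c' i * (d j - d' j)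
            * (Matrix.trace (ρ * kron ![pauli i, pauli j])).re} := by
    ext x
    constructor
    · rintro ⟨B, ⟨a, a', ha, ha', rfl⟩, rfl⟩
      refine ⟨a 0, a 1, a' 0, a' 1, ha 0, ha 1, ha' 0, ha' 1, ?_⟩
      rw [BPaux_bell_eq, Matrix.mul_add, Matrix.trace_add, Complex.add_re,
        BPaux_val_expand, BPaux_val_expand]
    · rintro ⟨c, d, c', d', hc, hd, hc', hd', rfl⟩
      refine ⟨_, ⟨![c, d], ![c', d'], ?_, ?_, rfl⟩, ?_⟩
      · intro k; fin_cases k <;> simpa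
      · intro k; fin_cases k <;> simpa
      · rw [BPaux_bell_eq, Matrix.mul_add, Matrix.trace_add, Complex.add_re,
          BPaux_val_expand, BPaux_val_expand]
        simp only [Matrix.cons_val_zero, Matrix.cons_val_one, Matrix.head_cons]
  rw [hset]
  exact key
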